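/- Fix positive integers ℓ ≤ k ≤ n, a constant ρ ∈ [0,1], and a randomized single-sample online algorithm A with capacity k. Suppose that for every collection X = ((x_1^1,x_1^2),…,(x_n^1,x_n^2)) of n pairs of nonnegative reals, when c is uniform on {1,2}^n, s_i = x_i^{c_i}, v_i = x_i^{3−c_i}, and u is an independent uniform seed, it holds that E[TOP_ℓ(A(u,s,v); v)] ≥ ρ · E[TOP_ℓ(v)]. Then for every product distribution D = D_1 × ⋯ × D_n on nonnegative reals, with s ∼ D and v ∼ D independent and u an independent uniform seed, E[TOP_ℓ(A(u,s,v); v)] ≥ ρ · E[TOP_ℓ(v)]. -/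

import Mathlib

open MeasureTheory Finset

/-- `TOPval ℓ A v` is the maximum of `∑ i ∈ B, v i` over `B ⊆ A` with `|B| ≤ ℓ`. -/
noncomputable def TOPval {n : ℕ} (ℓ : ℕ) (A : Finset (Fin n)) (v : Fin n → ℝ) : ℝ :=
  ((A.powerset.filter fun B => B.card ≤ ℓ).image fun B => ∑ i ∈ B, v i).max'
    (Finset.Nonempty.image
      ⟨∅, Finset.mem_filter.mpr ⟨Finset.empty_mem_powerset A, by simp⟩⟩ _)

/-- The sample vector determined by the pairs `X` and the coin flips `c`. -/
def sampleVec {n : ℕ} (X : Fin n → ℝ × ℝ) (c : Fin n → Bool) (i : Fin n) : ℝ :=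
  if c i then (X i).1 else (X i).2

/-- The award vector determined by the pairs `X` and the coin flips `c`. -/
def awardVec {n : ℕ} (X : Fin n → ℝ × ℝ) (c : Fin n → Bool) (i : Fin n) : ℝ :=
  if c i then (X i).2 else (X i).1

/-- A randomized single-sample online algorithm with capacity `k`: it receives a uniform
random seed `u ∈ [0,1]`, a sample vector `s`, and an online value vector `v`, outputs a set
of at most `k` indices, is online in `v` (the decision about index `i` depends only on
`v₁,…,vᵢ`), and is measurable. -/
structure SingleSampleAlg (n k : ℕ) where
  run : ℝ → (Fin n → ℝ) → (Fin n → ℝ) → Finset (Fin n)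
  card_le : ∀ u s v, (run u s v).card ≤ k
  online : ∀ u s v w (i : Fin n), (∀ j : Fin n, j ≤ i → v j = w j) →
    (i ∈ run u s v ↔ i ∈ run u s w)
  meas : ∀ i : Fin n,
    MeasurableSet {p : ℝ × (Fin n → ℝ) × (Fin n → ℝ) | i ∈ run p.1 p.2.1 p.2.2}

/-! ### Auxiliary lemmas about `TOPval` -/

lemma TOPval_nonneg {n : ℕ} (ℓ : ℕ) (A : Finset (Fin n)) (v : Fin n → ℝ) :
    0 ≤ TOPval ℓ A v := by
  apply Finset.le_max'
  exact Finset.mem_image.mpr ⟨∅, Finset.mem_filter.mpr ⟨Finset.empty_mem_powerset A, by simp⟩,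
    by simp⟩

lemma TOPval_mono {n : ℕ} (ℓ : ℕ) {A B : Finset (Fin n)} (h : A ⊆ B) (v : Fin n → ℝ) :
    TOPval ℓ A v ≤ TOPval ℓ B v := by
  apply Finset.max'_subset
  exact Finset.image_subset_image (Finset.filter_subset_filter _
    (Finset.powerset_mono.mpr h))

lemma TOPval_eq_sup' {n : ℕ} (ℓ : ℕ) (A : Finset (Fin n)) (v : Fin n → ℝ) :
    TOPval ℓ A v = (A.powerset.filter fun B => B.card ≤ ℓ).sup'
      ⟨∅, Finset.mem_filter.mpr ⟨Finset.empty_mem_powerset A, by simp⟩⟩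
      (fun B => ∑ i ∈ B, v i) := by
  rw [TOPval, Finset.max'_eq_sup', Finset.sup'_image]
  rfl

lemma measurable_TOPval {n : ℕ} (ℓ : ℕ) (A : Finset (Fin n)) :
    Measurable fun v : Fin n → ℝ => TOPval ℓ A v := by
  simp only [TOPval_eq_sup']
  have := Finset.measurable_sup' (α := ℝ)
    (s := A.powerset.filter fun B => B.card ≤ ℓ)
    (⟨∅, Finset.mem_filter.mpr ⟨Finset.empty_mem_powerset A, by simp⟩⟩)
    (f := fun B (v : Fin n → ℝ) => ∑ i ∈ B, v i)
    (fun B _ => Finset.measurable_sum _ fun i _ => measurable_pi_apply i)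
  convert this using 1
  ext v
  exact (Finset.sup'_apply _ _ v).symm

/-! ### Measurability of the algorithm's output value -/

lemma measurable_runEq {n k : ℕ} (A : SingleSampleAlg n k) (S : Finset (Fin n)) :
    MeasurableSet {p : ℝ × (Fin n → ℝ) × (Fin n → ℝ) | A.run p.1 p.2.1 p.2.2 = S} := by
  have : {p : ℝ × (Fin n → ℝ) × (Fin n → ℝ) | A.run p.1 p.2.1 p.2.2 = S} =
      ⋂ i : Fin n, (if i ∈ S then {p : ℝ × (Fin n → ℝ) × (Fin n → ℝ) | i ∈ A.run p.1 p.2.1 p.2.2}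
        else {p : ℝ × (Fin n → ℝ) × (Fin n → ℝ) | i ∈ A.run p.1 p.2.1 p.2.2}ᶜ) := by
    ext p
    simp only [Set.mem_setOf_eq, Set.mem_iInter]
    constructor
    · rintro rfl i
      by_cases hi : i ∈ A.run p.1 p.2.1 p.2.2 <;> simp [hi]
    · intro h
      ext i
      have := h i
      by_cases hi : i ∈ S <;> simp [hi] at this <;> simp [hi, this]
  rw [this]
  exact MeasurableSet.iInter fun i => by
    by_cases hi : i ∈ S
    · simpa [hi] using A.meas i
    · simpa [hi] using (A.meas i).compl

lemma measurable_F {n k : ℕ} (ℓ : ℕ) (A : SingleSampleAlg n k) :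
    Measurable fun p : ℝ × (Fin n → ℝ) × (Fin n → ℝ) =>
      TOPval ℓ (A.run p.1 p.2.1 p.2.2) p.2.2 := by
  classical
  have hrw : (fun p : ℝ × (Fin n → ℝ) × (Fin n → ℝ) =>
      TOPval ℓ (A.run p.1 p.2.1 p.2.2) p.2.2) =
      fun p => ∑ S : Finset (Fin n),
        if A.run p.1 p.2.1 p.2.2 = S then TOPval ℓ S p.2.2 else 0 := by
    funext p
    rw [Finset.sum_ite_eq]
    simp
  rw [hrw]
  exact Finset.measurable_sum _ fun S _ =>
    Measurable.ite (measurable_runEq A S)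
      ((measurable_TOPval ℓ S).comp (measurable_snd.comp measurable_snd)) measurable_const

/-! ### The measure-preserving reshuffling equivalence -/

noncomputable def pairEquiv (n : ℕ) (c : Fin n → Bool) :
    (Fin n → ℝ × ℝ) ≃ᵐ (Fin n → ℝ) × (Fin n → ℝ) :=
  (MeasurableEquiv.piCongrRight fun i =>
      if c i then MeasurableEquiv.refl (ℝ × ℝ)
      else (MeasurableEquiv.prodComm : ℝ × ℝ ≃ᵐ ℝ × ℝ)).trans
    (MeasurableEquiv.arrowProdEquivProdArrow ℝ ℝ (Fin n))

lemma pairEquiv_apply {n : ℕ} (c : Fin n → Bool) (X : Fin n → ℝ × ℝ) :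
    pairEquiv n c X = (sampleVec X c, awardVec X c) := by
  have h : ∀ i, (MeasurableEquiv.piCongrRight fun i =>
      if c i then MeasurableEquiv.refl (ℝ × ℝ)
      else (MeasurableEquiv.prodComm : ℝ × ℝ ≃ᵐ ℝ × ℝ)) X i
      = (sampleVec X c i, awardVec X c i) := by
    intro i
    simp only [MeasurableEquiv.piCongrRight, MeasurableEquiv.coe_mk, Equiv.piCongrRight,
      Equiv.coe_fn_mk, sampleVec, awardVec]
    by_cases hc : c i <;> simp [hc, MeasurableEquiv.prodComm, Prod.swap]
  simp only [pairEquiv, MeasurableEquiv.trans_apply]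
  ext i <;>
    simp only [MeasurableEquiv.arrowProdEquivProdArrow, Equiv.arrowProdEquivProdArrow,
      MeasurableEquiv.coe_mk, Equiv.coe_fn_mk, h i]

lemma pairEquiv_measurePreserving {n : ℕ} (c : Fin n → Bool) (D : Fin n → Measure ℝ)
    [∀ i, IsProbabilityMeasure (D i)] :
    MeasurePreserving (pairEquiv n c) (Measure.pi fun i => (D i).prod (D i))
      ((Measure.pi D).prod (Measure.pi D)) := by
  have h1 : MeasurePreserving
      (⇑(MeasurableEquiv.piCongrRight fun i =>
        if c i then MeasurableEquiv.refl (ℝ × ℝ)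
        else (MeasurableEquiv.prodComm : ℝ × ℝ ≃ᵐ ℝ × ℝ)))
      (Measure.pi fun i => (D i).prod (D i)) (Measure.pi fun i => (D i).prod (D i)) := by
    have := measurePreserving_pi (fun i => (D i).prod (D i)) (fun i => (D i).prod (D i))
      (f := fun i => ⇑(if c i then MeasurableEquiv.refl (ℝ × ℝ)
        else (MeasurableEquiv.prodComm : ℝ × ℝ ≃ᵐ ℝ × ℝ)))
      (fun i => by
        by_cases hc : c i
        · rw [if_pos hc]; exact MeasurePreserving.id ((D i).prod (D i))
        · simpa [hc, MeasurableEquiv.prodComm] using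
            Measure.measurePreserving_swap (μ := D i) (ν := D i))
    convert this using 1
    rfl
  exact (measurePreserving_arrowProdEquivProdArrow ℝ ℝ (Fin n) D D).comp h1

set_option maxHeartbeats 1000000

/-- **Reduction lemma (Lemma 2.2 of Ezra–Feldman–Nehama).**
If a single-sample algorithm `A` with capacity `k` achieves a `ρ`-fraction of `TOP_ℓ` on every
pair distribution `D_X` (each of `n` pairs of nonnegative reals split uniformly into a sample
and an award), then it achieves a `ρ`-fraction of `TOP_ℓ` for every product distribution
`D = D₁ × ⋯ × Dₙ` on nonnegative reals, with `s, v ~ D` independent and a uniform seed. -/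
theorem single_sample_reduction_to_pairs (n k ℓ : ℕ) (hℓ : 1 ≤ ℓ) (hℓk : ℓ ≤ k) (hkn : k ≤ n)
    (ρ : ℝ) (hρ0 : 0 ≤ ρ) (hρ1 : ρ ≤ 1) (A : SingleSampleAlg n k)
    (hpairs : ∀ X : Fin n → ℝ × ℝ, (∀ i, 0 ≤ (X i).1 ∧ 0 ≤ (X i).2) →
      ρ * (((2 : ℝ) ^ n)⁻¹ * ∑ c : Fin n → Bool, TOPval ℓ Finset.univ (awardVec X c)) ≤
        ((2 : ℝ) ^ n)⁻¹ * ∑ c : Fin n → Bool,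
          ∫ u in Set.Icc (0 : ℝ) 1,
            TOPval ℓ (A.run u (sampleVec X c) (awardVec X c)) (awardVec X c))
    (D : Fin n → Measure ℝ) [∀ i, IsProbabilityMeasure (D i)]
    (hDnonneg : ∀ i, D i {x : ℝ | x < 0} = 0) :
    ρ * ∫ p : ℝ × (Fin n → ℝ) × (Fin n → ℝ), TOPval ℓ Finset.univ p.2.2
          ∂((volume.restrict (Set.Icc (0 : ℝ) 1)).prod ((Measure.pi D).prod (Measure.pi D))) ≤
      ∫ p : ℝ × (Fin n → ℝ) × (Fin n → ℝ), TOPval ℓ (A.run p.1 p.2.1 p.2.2) p.2.2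
          ∂((volume.restrict (Set.Icc (0 : ℝ) 1)).prod ((Measure.pi D).prod (Measure.pi D))) := by
  classical
  -- Notation
  let μ0 : Measure ℝ := volume.restrict (Set.Icc (0 : ℝ) 1)
  let ν : Measure (Fin n → ℝ) := Measure.pi D
  let π : Measure (Fin n → ℝ × ℝ) := Measure.pi fun i => (D i).prod (D i)
  let P : Measure (ℝ × (Fin n → ℝ) × (Fin n → ℝ)) := μ0.prod (ν.prod ν)
  let g : (Fin n → ℝ) → ℝ := fun v => TOPval ℓ Finset.univ v
  let F : ℝ × (Fin n → ℝ) × (Fin n → ℝ) → ℝ :=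
    fun p => TOPval ℓ (A.run p.1 p.2.1 p.2.2) p.2.2
  have hμ0prob : IsProbabilityMeasure μ0 :=
    ⟨by simp [μ0, Measure.restrict_apply_univ, Real.volume_Icc]⟩
  have hg_meas : Measurable g := measurable_TOPval ℓ Finset.univ
  have hF_meas : Measurable F := measurable_F ℓ A
  have hF_nonneg : ∀ p, 0 ≤ F p := fun p => TOPval_nonneg _ _ _
  have hF_le : ∀ p, F p ≤ g p.2.2 := fun p => TOPval_mono ℓ (Finset.subset_univ _) _
  have hsnd2_meas : Measurable fun p : ℝ × (Fin n → ℝ) × (Fin n → ℝ) => p.2.2 :=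
    measurable_snd.comp measurable_snd
  -- the second-coordinate marginal of `P` is `ν`
  have hmap : Measure.map (fun p : ℝ × (Fin n → ℝ) × (Fin n → ℝ) => p.2.2) P = ν := by
    have h1 : (fun p : ℝ × (Fin n → ℝ) × (Fin n → ℝ) => p.2.2) = Prod.snd ∘ Prod.snd := rfl
    rw [h1, ← Measure.map_map measurable_snd measurable_snd, Measure.map_snd_prod,
      measure_univ, one_smul, Measure.map_snd_prod, measure_univ, one_smul]
  have hGint_eq : ∫ p, g p.2.2 ∂P = ∫ v, g v ∂ν := by
    have := integral_map (μ := P) hsnd2_meas.aemeasurable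
      (f := g) hg_meas.aestronglyMeasurable
    rw [hmap] at this
    exact this.symm
  -- reduce to the named form
  suffices h : ρ * ∫ p, g p.2.2 ∂P ≤ ∫ p, F p ∂P by exact h
  by_cases hInt : Integrable g ν
  case neg =>
    -- degenerate case: the benchmark is not integrable, so its Bochner integral is `0`
    have h2 : ¬ Integrable (fun p => g p.2.2) P := by
      intro h
      apply hInt
      have h3 : Integrable g
          (Measure.map (fun p : ℝ × (Fin n → ℝ) × (Fin n → ℝ) => p.2.2) P) :=
        (integrable_map_measure (by rw [hmap]; exact hg_meas.aestronglyMeasurable)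
          hsnd2_meas.aemeasurable).mpr h
      rwa [hmap] at h3
    calc ρ * ∫ p, g p.2.2 ∂P = ρ * 0 := by rw [integral_undef h2]
      _ = 0 := mul_zero ρ
      _ ≤ ∫ p, F p ∂P := integral_nonneg hF_nonneg
  case pos =>
  -- main case
  have hgP : Integrable (fun p => g p.2.2) P := by
    have h3 : Integrable g
        (Measure.map (fun p : ℝ × (Fin n → ℝ) × (Fin n → ℝ) => p.2.2) P) := by
      rw [hmap]; exact hInt
    exact (integrable_map_measure (by rw [hmap]; exact hg_meas.aestronglyMeasurable)
      hsnd2_meas.aemeasurable).mp h3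
  have hFint : Integrable F P :=
    Integrable.mono' hgP hF_meas.aestronglyMeasurable
      (Filter.Eventually.of_forall fun p => by
        rw [Real.norm_eq_abs, abs_of_nonneg (hF_nonneg p)]; exact hF_le p)
  have hΦ : ∀ c : Fin n → Bool, MeasurePreserving (pairEquiv n c) π (ν.prod ν) :=
    fun c => pairEquiv_measurePreserving c D
  -- the award-vector benchmark
  have hsnd_eq : ∫ q : (Fin n → ℝ) × (Fin n → ℝ), g q.2 ∂(ν.prod ν) = ∫ v, g v ∂ν := by
    have hmap2 : Measure.map (Prod.snd) (ν.prod ν) = ν := by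
      rw [Measure.map_snd_prod, measure_univ, one_smul]
    have := integral_map (μ := ν.prod ν) measurable_snd.aemeasurable
      (f := g) hg_meas.aestronglyMeasurable
    rw [hmap2] at this
    exact this.symm
  have hsnd_int : Integrable (fun q : (Fin n → ℝ) × (Fin n → ℝ) => g q.2) (ν.prod ν) := by
    have hmap2 : Measure.map (Prod.snd) (ν.prod ν) = ν := by
      rw [Measure.map_snd_prod, measure_univ, one_smul]
    have h3 : Integrable g (Measure.map Prod.snd (ν.prod ν)) := by rw [hmap2]; exact hInt
    exact (integrable_map_measure (by rw [hmap2]; exact hg_meas.aestronglyMeasurable)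
      measurable_snd.aemeasurable).mp h3
  have hW_int : ∀ c : Fin n → Bool, Integrable (fun X => g (awardVec X c)) π := by
    intro c
    have h3 := ((hΦ c).integrable_comp
      (hg_meas.comp measurable_snd).aestronglyMeasurable).mpr hsnd_int
    exact h3.congr (Filter.Eventually.of_forall fun X => by
      simp [Function.comp, pairEquiv_apply])
  have hW_eq : ∀ c : Fin n → Bool, ∫ X, g (awardVec X c) ∂π = ∫ v, g v ∂ν := by
    intro c
    have h3 := (hΦ c).integral_comp' (fun q : (Fin n → ℝ) × (Fin n → ℝ) => g q.2)
    have h4 : ∀ X, g ((pairEquiv n c X).2) = g (awardVec X c) := by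
      intro X; rw [pairEquiv_apply]
    simp_rw [h4] at h3
    rw [h3, hsnd_eq]
  -- the algorithm-value side
  let Ψ : (Fin n → Bool) → (ℝ × (Fin n → ℝ × ℝ) ≃ᵐ ℝ × (Fin n → ℝ) × (Fin n → ℝ)) :=
    fun c => (MeasurableEquiv.refl ℝ).prodCongr (pairEquiv n c)
  have hΨ : ∀ c, MeasurePreserving (Ψ c) (μ0.prod π) P := by
    intro c
    have h1 := (MeasurePreserving.id μ0).prod (hΦ c)
    have h2 : ⇑(Ψ c) = Prod.map id ⇑(pairEquiv n c) := rfl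
    rw [h2]
    exact h1
  have hΨ_apply : ∀ (c : Fin n → Bool) (u : ℝ) (X : Fin n → ℝ × ℝ),
      F (Ψ c (u, X)) =
        TOPval ℓ (A.run u (sampleVec X c) (awardVec X c)) (awardVec X c) := by
    intro c u X
    have : Ψ c (u, X) = (u, (sampleVec X c, awardVec X c)) := by
      have : Ψ c (u, X) = (u, pairEquiv n c X) := rfl
      rw [this, pairEquiv_apply]
    rw [this]
  have hcomp_int : ∀ c, Integrable (F ∘ ⇑(Ψ c)) (μ0.prod π) :=
    fun c => ((hΨ c).integrable_comp hF_meas.aestronglyMeasurable).mpr hFint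
  -- Fubini for each fixed `c`
  have hJ_eq : ∀ c : Fin n → Bool,
      ∫ p, F p ∂P = ∫ X, (∫ u in Set.Icc (0 : ℝ) 1,
        TOPval ℓ (A.run u (sampleVec X c) (awardVec X c)) (awardVec X c)) ∂π := by
    intro c
    have h1 : ∫ p, F p ∂P = ∫ q, F (Ψ c q) ∂(μ0.prod π) := ((hΨ c).integral_comp' F).symm
    have h2 : ∫ q, F (Ψ c q) ∂(μ0.prod π) = ∫ u, (∫ X, F (Ψ c (u, X)) ∂π) ∂μ0 :=
      integral_prod _ (hcomp_int c)
    have h3 : ∫ u, (∫ X, F (Ψ c (u, X)) ∂π) ∂μ0 = ∫ X, (∫ u, F (Ψ c (u, X)) ∂μ0) ∂π :=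
      integral_integral_swap (hcomp_int c)
    rw [h1, h2, h3]
    congr 1
    funext X
    exact integral_congr_ae (Filter.Eventually.of_forall fun u => hΨ_apply c u X)
  have hJ_int : ∀ c : Fin n → Bool, Integrable (fun X =>
      ∫ u in Set.Icc (0 : ℝ) 1,
        TOPval ℓ (A.run u (sampleVec X c) (awardVec X c)) (awardVec X c)) π := by
    intro c
    have h1 := (hcomp_int c).integral_prod_right
    exact h1.congr (Filter.Eventually.of_forall fun X =>
      integral_congr_ae (Filter.Eventually.of_forall fun u => hΨ_apply c u X))
  -- a.e. nonnegativity of the pairs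
  have hae0 : ∀ᵐ X ∂π, ∀ i, 0 ≤ (X i).1 ∧ 0 ≤ (X i).2 := by
    rw [MeasureTheory.ae_all_iff]
    intro i
    have hsub : {X : Fin n → ℝ × ℝ | ¬(0 ≤ (X i).1 ∧ 0 ≤ (X i).2)} ⊆
        (Function.eval i ⁻¹' {p : ℝ × ℝ | p.1 < 0}) ∪
        (Function.eval i ⁻¹' {p : ℝ × ℝ | p.2 < 0}) := by
      intro X hX
      simp only [Set.mem_setOf_eq, not_and_or, not_le] at hX
      rcases hX with h | h
      · exact Or.inl h
      · exact Or.inr h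
    apply measure_mono_null hsub
    have hz1 : π (Function.eval i ⁻¹' {p : ℝ × ℝ | p.1 < 0}) = 0 := by
      rw [Set.eval_preimage]
      rw [Measure.pi_pi]
      apply Finset.prod_eq_zero (Finset.mem_univ i)
      rw [Function.update_self]
      have hset : {p : ℝ × ℝ | p.1 < 0} = {x : ℝ | x < 0} ×ˢ (Set.univ : Set ℝ) := by
        ext p; simp
      rw [hset, Measure.prod_prod, hDnonneg i, zero_mul]
    have hz2 : π (Function.eval i ⁻¹' {p : ℝ × ℝ | p.2 < 0}) = 0 := by
      rw [Set.eval_preimage]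
      rw [Measure.pi_pi]
      apply Finset.prod_eq_zero (Finset.mem_univ i)
      rw [Function.update_self]
      have hset : {p : ℝ × ℝ | p.2 < 0} = (Set.univ : Set ℝ) ×ˢ {x : ℝ | x < 0} := by
        ext p; simp
      rw [hset, Measure.prod_prod, hDnonneg i, mul_zero]
    exact measure_union_null hz1 hz2
  -- the a.e. pointwise inequality coming from `hpairs`
  have hae : ∀ᵐ X ∂π,
      ρ * (((2 : ℝ) ^ n)⁻¹ * ∑ c : Fin n → Bool, g (awardVec X c)) ≤
        ((2 : ℝ) ^ n)⁻¹ * ∑ c : Fin n → Bool,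
          ∫ u in Set.Icc (0 : ℝ) 1,
            TOPval ℓ (A.run u (sampleVec X c) (awardVec X c)) (awardVec X c) := by
    filter_upwards [hae0] with X hX
    exact hpairs X hX
  -- integrability of both sides of the pointwise inequality
  have hint1 : Integrable (fun X =>
      ρ * (((2 : ℝ) ^ n)⁻¹ * ∑ c : Fin n → Bool, g (awardVec X c))) π := by
    apply Integrable.const_mul
    apply Integrable.const_mul
    exact integrable_finset_sum _ fun c _ => hW_int c
  have hint2 : Integrable (fun X =>
      ((2 : ℝ) ^ n)⁻¹ * ∑ c : Fin n → Bool,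
        ∫ u in Set.Icc (0 : ℝ) 1,
          TOPval ℓ (A.run u (sampleVec X c) (awardVec X c)) (awardVec X c)) π := by
    apply Integrable.const_mul
    exact integrable_finset_sum _ fun c _ => hJ_int c
  have hcard : (Fintype.card (Fin n → Bool) : ℝ) = (2 : ℝ) ^ n := by
    simp [Fintype.card_fun]
  have h2npos : ((2 : ℝ) ^ n) ≠ 0 := by positivity
  -- putting everything together
  calc ρ * ∫ p, g p.2.2 ∂P
      = ρ * ∫ v, g v ∂ν := by rw [hGint_eq]
    _ = ρ * (((2 : ℝ) ^ n)⁻¹ * ∑ c : Fin n → Bool, ∫ X, g (awardVec X c) ∂π) := by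
        have : ∑ c : Fin n → Bool, ∫ X, g (awardVec X c) ∂π =
            (2 : ℝ) ^ n * ∫ v, g v ∂ν := by
          rw [Finset.sum_congr rfl fun c _ => hW_eq c, Finset.sum_const, nsmul_eq_mul,
            Finset.card_univ, hcard]
        rw [this, inv_mul_cancel_left₀ h2npos]
    _ = ∫ X, ρ * (((2 : ℝ) ^ n)⁻¹ * ∑ c : Fin n → Bool, g (awardVec X c)) ∂π := by
        rw [integral_const_mul ρ, integral_const_mul,
          integral_finset_sum _ fun c _ => hW_int c]
    _ ≤ ∫ X, ((2 : ℝ) ^ n)⁻¹ * ∑ c : Fin n → Bool,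
          (∫ u in Set.Icc (0 : ℝ) 1,
            TOPval ℓ (A.run u (sampleVec X c) (awardVec X c)) (awardVec X c)) ∂π :=
        integral_mono_ae hint1 hint2 hae
    _ = ((2 : ℝ) ^ n)⁻¹ * ∑ c : Fin n → Bool, ∫ X,
          (∫ u in Set.Icc (0 : ℝ) 1,
            TOPval ℓ (A.run u (sampleVec X c) (awardVec X c)) (awardVec X c)) ∂π := by
        rw [integral_const_mul, integral_finset_sum _ fun c _ => hJ_int c]
    _ = ∫ p, F p ∂P := by
        rw [Finset.sum_congr rfl fun c _ => (hJ_eq c).symm, Finset.sum_const, nsmul_eq_mul,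
          Finset.card_univ, hcard, inv_mul_cancel_left₀ h2npos]
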